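/- Let m be a positive integer, n = 2m, q = 3^n, and let δ ∈ F_q satisfy Tr_m^{2m}(δ) ≠ 0. Define F : F_q → F_q by F(x) = (x^{3^m} − x + δ)^{3^{2m−1} + 2·3^{m−1}} + x. Then for every c ∈ F_q not in the subfield F_{3^m} (i.e., c^{3^m} ≠ c), the c-differential uniformity of F equals 3: for all a, b ∈ F_q the equation F(x+a) − c·F(x) = b has at most three solutions x ∈ F_q, and there exist a, b ∈ F_q for which it has exactly three solutions. -/

import Mathlib

open Polynomial

lemma aux_ncard_roots {K : Type*} [Field K] (P : Polynomial K) (hP : P ≠ 0) :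
    {x : K | P.eval x = 0}.ncard ≤ P.natDegree := by
  classical
  have hsub : {x : K | P.eval x = 0} ⊆ (P.roots.toFinset : Set K) := by
    intro x hx
    simp only [Set.mem_setOf_eq] at hx
    simp only [Finset.coe_sort_coe, Multiset.mem_toFinset, Finset.mem_coe]
    rw [Polynomial.mem_roots hP]
    exact hx
  calc {x : K | P.eval x = 0}.ncard ≤ ((P.roots.toFinset : Set K)).ncard :=
        Set.ncard_le_ncard hsub (P.roots.toFinset.finite_toSet)
    _ = P.roots.toFinset.card := Set.ncard_coe_finset _
    _ ≤ Multiset.card P.roots := Multiset.toFinset_card_le _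
    _ ≤ P.natDegree := Polynomial.card_roots' P

lemma aux_cubic {K : Type*} [Field K] (p3 p2 p1 p0 : K) (hp : p3 ≠ 0) :
    {x : K | p3 * x ^ 3 + p2 * x ^ 2 + p1 * x + p0 = 0}.ncard ≤ 3 := by
  classical
  set P : Polynomial K := C p3 * X ^ 3 + C p2 * X ^ 2 + C p1 * X + C p0 with hPdef
  have hdeg : P.natDegree = 3 := natDegree_cubic hp
  have hP : P ≠ 0 := by
    intro h
    rw [h] at hdeg
    simp at hdeg
  have h1 := aux_ncard_roots P hP
  rw [hdeg] at h1
  refine le_trans (le_of_eq ?_) h1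
  congr 1
  ext x
  simp [hPdef]

lemma aux_pow_eq {K : Type*} [Field K] (n : ℕ) (hn : 2 ≤ n) (u : K) :
    {x : K | x ^ n = u * x}.ncard ≤ n := by
  classical
  set P : Polynomial K := X ^ n - C u * X with hPdef
  have hdegX : ((X : Polynomial K) ^ n).natDegree = n := natDegree_X_pow n
  have hlt : ((C u * X : Polynomial K)).natDegree < ((X : Polynomial K) ^ n).natDegree := by
    rw [hdegX]
    calc ((C u * X : Polynomial K)).natDegree ≤ (X : Polynomial K).natDegree :=
          natDegree_C_mul_le u X
      _ = 1 := natDegree_X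
      _ < n := hn
  have hdeg : P.natDegree = n := by
    rw [hPdef, natDegree_sub_eq_left_of_natDegree_lt hlt, hdegX]
  have hP : P ≠ 0 := by
    intro h
    rw [h] at hdeg
    simp at hdeg
    omega
  have h1 := aux_ncard_roots P hP
  rw [hdeg] at h1
  refine le_trans (le_of_eq ?_) h1
  congr 1
  ext x
  simp [hPdef, sub_eq_zero]

lemma aux_surj {K : Type*} [Field K] [Fintype K] {k : ℕ} (hk : 2 ≤ 3 ^ k)
    (hcard : Fintype.card K = 3 ^ k * 3 ^ k)
    (hadd : ∀ x y : K, (x + y) ^ 3 ^ k = x ^ 3 ^ k + y ^ 3 ^ k)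
    {z : K} (hz : z ^ 3 ^ k = -z) : ∃ x : K, x ^ 3 ^ k - x = z := by
  classical
  have hodd : Odd (3 ^ k) := Odd.pow (by decide)
  have hqq : ∀ x : K, (x ^ 3 ^ k) ^ 3 ^ k = x := by
    intro x
    rw [← pow_mul, ← hcard]
    exact FiniteField.pow_card x
  set f : K →+ K :=
    { toFun := fun x => x ^ 3 ^ k - x
      map_zero' := by simp [zero_pow (by positivity : 3 ^ k ≠ 0)]
      map_add' := by
        intro x y
        rw [hadd]
        ring } with hf
  have hker : ((f.ker : Set K)).ncard ≤ 3 ^ k := by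
    have hseq : (f.ker : Set K) ⊆ {x : K | x ^ 3 ^ k = (1 : K) * x} := by
      intro x hx
      simp only [SetLike.mem_coe, AddMonoidHom.mem_ker, hf, AddMonoidHom.coe_mk,
        ZeroHom.coe_mk] at hx
      simp only [Set.mem_setOf_eq, one_mul]
      exact sub_eq_zero.mp hx
    exact le_trans (Set.ncard_le_ncard hseq (Set.toFinite _)) (aux_pow_eq _ hk _)
  have hrange : (f.range : Set K) ⊆ {x : K | x ^ 3 ^ k = (-1 : K) * x} := by
    rintro z ⟨x, rfl⟩
    simp only [Set.mem_setOf_eq, hf, AddMonoidHom.coe_mk, ZeroHom.coe_mk]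
    rw [show x ^ 3 ^ k - x = x ^ 3 ^ k + (-x) by ring, hadd, hqq, hodd.neg_pow]
    ring
  have hcard2 : Nat.card K = Nat.card f.range * Nat.card f.ker := by
    rw [AddSubgroup.card_eq_card_quotient_mul_card_addSubgroup f.ker]
    congr 1
    exact Nat.card_congr (QuotientAddGroup.quotientKerEquivRange f).toEquiv
  have hkercard : Nat.card f.ker ≤ 3 ^ k :=
    le_trans (le_of_eq (Nat.card_coe_set_eq (f.ker : Set K))) hker
  have hrange_le : ({x : K | x ^ 3 ^ k = (-1 : K) * x}).ncard ≤ Nat.card f.range := by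
    have h1 : 3 ^ k * 3 ^ k ≤ Nat.card f.range * (3 ^ k) := by
      calc 3 ^ k * 3 ^ k = Nat.card K := by rw [Nat.card_eq_fintype_card, hcard]
        _ = Nat.card f.range * Nat.card f.ker := hcard2
        _ ≤ Nat.card f.range * 3 ^ k := Nat.mul_le_mul_left _ hkercard
    have h2 : 3 ^ k ≤ Nat.card f.range := Nat.le_of_mul_le_mul_right h1 (by positivity)
    exact le_trans (aux_pow_eq _ hk _) h2
  have heq : (f.range : Set K) = {x : K | x ^ 3 ^ k = (-1 : K) * x} := by
    apply Set.eq_of_subset_of_ncard_le hrange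
    · exact le_trans hrange_le (le_of_eq (Nat.card_coe_set_eq (f.range : Set K)).symm)
  have hzmem : z ∈ (f.range : Set K) := by
    rw [heq]
    simp only [Set.mem_setOf_eq]
    rw [hz]; ring
  obtain ⟨x, hx⟩ := hzmem
  exact ⟨x, hx⟩
open Polynomial

set_option maxHeartbeats 1000000 in
theorem stmt_16 (m : ℕ) (hm : 0 < m) (F : Type*) [Field F] [Fintype F]
    (hF : Fintype.card F = 3 ^ (2 * m)) (δ c : F)
    (hδ : δ + δ ^ (3 ^ m) ≠ 0)
    (hc : c ^ (3 ^ m) ≠ c)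
    (G : F → F)
    (hG : ∀ x, G x = (x ^ (3 ^ m) - x + δ) ^ (3 ^ (2 * m - 1) + 2 * 3 ^ (m - 1)) + x) :
    (∀ a b : F, {x : F | G (x + a) - c * G x = b}.ncard ≤ 3) ∧
    (∃ a b : F, {x : F | G (x + a) - c * G x = b}.ncard = 3) := by
  classical
  -- characteristic 3
  haveI hCr : CharP F (ringChar F) := ringChar.charP F
  obtain ⟨n, hprime, hcard3⟩ := FiniteField.card F (ringChar F)
  have hr3 : ringChar F = 3 := by
    have h1 : ringChar F ∣ 3 ^ (2 * m) := by
      rw [← hF, hcard3]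
      exact dvd_pow_self _ n.pos.ne'
    have h2 : ringChar F ∣ 3 := hprime.dvd_of_dvd_pow h1
    exact (Nat.prime_dvd_prime_iff_eq hprime (by norm_num)).mp h2
  haveI hC3 : CharP F 3 := hr3 ▸ hCr
  haveI : Fact (Nat.Prime 3) := ⟨by norm_num⟩
  haveI : ExpChar F 3 := inferInstance
  have h30 : (3 : F) = 0 := by
    have := CharP.cast_eq_zero F 3
    exact_mod_cast this
  -- Frobenius toolkit
  obtain ⟨φ, hφd⟩ : ∃ φ : F →+* F, ∀ x : F, φ x = x ^ 3 ^ m :=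
    ⟨iterateFrobenius F 3 m, fun x => rfl⟩
  have hq2 : ∀ x : F, x ^ 3 ^ (2 * m) = x := by
    intro x
    rw [← hF]
    exact FiniteField.pow_card x
  have hpadd : ∀ x y : F, (x + y) ^ 3 ^ m = x ^ 3 ^ m + y ^ 3 ^ m := by
    intro x y
    rw [← hφd, ← hφd, ← hφd, map_add]
  have hφφ : ∀ x : F, (x ^ 3 ^ m) ^ 3 ^ m = x := by
    intro x
    rw [← pow_mul, ← pow_add, show m + m = 2 * m by omega]
    exact hq2 x
  have hodd : Odd (3 ^ m) := Odd.pow (by decide)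
  have hpneg : ∀ x : F, (-x) ^ 3 ^ m = -(x ^ 3 ^ m) := fun x => hodd.neg_pow x
  have hpsub : ∀ x y : F, (x - y) ^ 3 ^ m = x ^ 3 ^ m - y ^ 3 ^ m := by
    intro x y
    rw [sub_eq_add_neg, hpadd, hpneg]
    ring
  have hcube_add : ∀ x y : F, (x + y) ^ 3 = x ^ 3 + y ^ 3 := by
    intro x y
    linear_combination (x ^ 2 * y + x * y ^ 2) * h30
  have hcube_sub : ∀ x y : F, (x - y) ^ 3 = x ^ 3 - y ^ 3 := by
    intro x y
    linear_combination (x * y ^ 2 - x ^ 2 * y) * h30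
  -- notation
  set s := δ + δ ^ 3 ^ m with hs
  have hs0 : s ≠ 0 := hδ
  clear_value s
  set cb := c ^ 3 ^ m with hcb
  have hccb : cb ≠ c := hc
  clear_value cb
  -- G cubes
  have hGc : ∀ y : F, (G y) ^ 3 =
      (y ^ 3 ^ m - y + δ) * (s - (y ^ 3 ^ m - y + δ)) ^ 2 + y ^ 3 := by
    intro y
    have e1 : (3 ^ (2 * m - 1) + 2 * 3 ^ (m - 1)) * 3 = 3 ^ (2 * m) + 2 * 3 ^ m := by
      have h1 : (3:ℕ) ^ (2 * m - 1) * 3 = 3 ^ (2 * m) := by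
        rw [← pow_succ]
        congr 1
        omega
      have h2 : (3:ℕ) ^ (m - 1) * 3 = 3 ^ m := by
        rw [← pow_succ]
        congr 1
        omega
      rw [add_mul, h1, mul_assoc, h2]
    have e2 : (y ^ 3 ^ m - y + δ) ^ 3 ^ m = s - (y ^ 3 ^ m - y + δ) := by
      rw [hpadd, hpsub, hφφ, hs]
      ring
    have e3 : ((y ^ 3 ^ m - y + δ) ^ (3 ^ (2 * m - 1) + 2 * 3 ^ (m - 1))) ^ 3
        = (y ^ 3 ^ m - y + δ) * ((y ^ 3 ^ m - y + δ) ^ 3 ^ m) ^ 2 := by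
      rw [← pow_mul, e1, pow_add, hq2, mul_comm 2 (3 ^ m), pow_mul]
    rw [hG y, hcube_add, e3, e2]
  -- nonzero constants
  have hcbc : cb ^ 3 ^ m = c := by
    rw [hcb]
    exact hφφ c
  have hα : (1 : F) - c ^ 3 ≠ 0 := by
    intro h
    have h1 : (c - 1) ^ 3 = 0 := by
      rw [hcube_sub]
      linear_combination -h
    have h2 : c = 1 := sub_eq_zero.mp (pow_eq_zero_iff (by norm_num : 3 ≠ 0) |>.mp h1)
    apply hccb
    rw [hcb, h2, one_pow]
  have hᾱ : (1 : F) - cb ^ 3 ≠ 0 := by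
    intro h
    have h1 : (cb - 1) ^ 3 = 0 := by
      rw [hcube_sub]
      linear_combination -h
    have h2 : cb = 1 := sub_eq_zero.mp (pow_eq_zero_iff (by norm_num : 3 ≠ 0) |>.mp h1)
    have h3 : c = 1 := by rw [← hcbc, h2, one_pow]
    apply hccb
    rw [h2, h3]
  have hγ : c ^ 3 - cb ^ 3 ≠ 0 := by
    intro h
    have h1 : (cb - c) ^ 3 = 0 := by
      rw [hcube_sub]
      linear_combination -h
    exact hccb (sub_eq_zero.mp (pow_eq_zero_iff (by norm_num : 3 ≠ 0) |>.mp h1))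
  -- global φ facts
  have hφs : φ s = s := by
    rw [hφd, hs, hpadd, hφφ]
    ring
  have hφc : φ c = cb := by rw [hφd, hcb]
  have hφcb : φ cb = c := by rw [hφd, hcb, hφφ]
  have hφδ : δ ^ 3 ^ m = s - δ := by
    rw [hs]
    ring
  -- PART 1
  have part1 : ∀ a b : F, {x : F | G (x + a) - c * G x = b}.ncard ≤ 3 := by
    intro a b
    set A := a ^ 3 ^ m - a with hA
    set bb := b ^ 3 ^ m with hbb
    clear_value A bb
    have main : ∀ x : F, G (x + a) - c * G x = b →
        (((1 - cb^3)*(1 - c^3)) * (x ^ 3 ^ m - x + δ)^3 +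
          (-3*s + 3*s*cb^3 + 3*s*c^3 - 3*s*c^3*cb^3 + 6*A - 3*A*cb^3 - 3*A*c^3) * (x ^ 3 ^ m - x + δ)^2 +
          (s^2 - s^2*cb^3 - s^2*c^3 + s^2*c^3*cb^3 - 6*A*s + 4*A*s*cb^3 + 2*A*s*c^3 + 6*A^2 - 3*A^2*cb^3 - 3*A^2*c^3) * (x ^ 3 ^ m - x + δ) +
          (δ^3 - δ^3*cb^3 - δ^3*c^3 + δ^3*c^3*cb^3 + bb^3 - bb^3*c^3 - b^3 + b^3*cb^3 - a^3*cb^3 + a^3*c^3 - 3*A*a^2 + 3*A*a^2*c^3 + A*s^2 - A*s^2*cb^3 - 3*A^2*a + 3*A^2*a*c^3 - 3*A^2*s + 2*A^2*s*cb^3 + A^2*s*c^3 + A^3 - A^3*cb^3) = 0)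
        ∧ (1 - c^3) * x^3 =
            -(((x ^ 3 ^ m - x + δ) + A)*(s - ((x ^ 3 ^ m - x + δ) + A))^2 + a^3
              - c^3*((x ^ 3 ^ m - x + δ)*(s - (x ^ 3 ^ m - x + δ))^2) - b^3) := by
      intro x hx
      set t := x ^ 3 ^ m - x + δ with ht
      clear_value t
      have hfin : (G (x + a))^3 - c^3*(G x)^3 - b^3 = 0 := by
        have h0 : G (x + a) - c * G x - b = 0 := by
          rw [hx]
          ring
        have h1 : (G (x + a) - c * G x - b) ^ 3 = 0 := by
          rw [h0]
          ring
        calc (G (x + a))^3 - c^3*(G x)^3 - b^3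
            = (G (x + a) - c * G x - b) ^ 3 := by
              linear_combination -(hcube_sub (G (x+a) - c * G x) b) - hcube_sub (G (x+a)) (c * G x)
          _ = 0 := h1
      have hu1 : (x + a) ^ 3 ^ m - (x + a) + δ = t + A := by
        rw [hpadd]
        linear_combination -ht - hA
      have hGa : (G (x + a))^3 = (t + A)*(s - (t + A))^2 + (x + a)^3 := by
        rw [hGc (x + a), hu1]
      have hGx : (G x)^3 = t*(s - t)^2 + x^3 := by
        have h0 := hGc x
        rw [← ht] at h0
        exact h0
      have hE3 : (t + A)*(s - (t + A))^2 + a^3 - c^3*(t*(s - t)^2) - b^3 + (1 - c^3)*x^3 = 0 := by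
        linear_combination hfin - hGa + c^3 * hGx - hcube_add x a
      have hφt : φ t = s - t := by
        rw [hφd, ht, hpadd, hpsub, hφφ, hs]
        ring
      have hφA : φ A = -A := by
        rw [hφd, hA, hpsub, hφφ]
        ring
      have hφb : φ b = bb := by rw [hφd, hbb]
      have hφx : φ x = x + t - δ := by
        rw [hφd, ht]
        ring
      have hφa : φ a = a + A := by
        rw [hφd, hA]
        ring
      have hE3c := congrArg φ hE3
      simp only [map_add, map_sub, map_mul, map_pow, map_one, map_zero] at hE3c
      rw [hφt, hφA, hφs, hφc, hφb, hφx, hφa] at hE3c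
      rw [show (x + t - δ)^3 = x^3 + t^3 - δ^3 by rw [hcube_sub, hcube_add]] at hE3c
      constructor
      · linear_combination (1 - cb^3) * hE3 - (1 - c^3) * hE3c
      · linear_combination hE3
    refine le_trans (Set.ncard_le_ncard_of_injOn (fun x : F => x ^ 3 ^ m - x + δ)
      ?_ ?_ (Set.toFinite _))
      (aux_cubic ((1 - cb^3)*(1 - c^3))
        (-3*s + 3*s*cb^3 + 3*s*c^3 - 3*s*c^3*cb^3 + 6*A - 3*A*cb^3 - 3*A*c^3)
        (s^2 - s^2*cb^3 - s^2*c^3 + s^2*c^3*cb^3 - 6*A*s + 4*A*s*cb^3 + 2*A*s*c^3 + 6*A^2 - 3*A^2*cb^3 - 3*A^2*c^3)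
        (δ^3 - δ^3*cb^3 - δ^3*c^3 + δ^3*c^3*cb^3 + bb^3 - bb^3*c^3 - b^3 + b^3*cb^3 - a^3*cb^3 + a^3*c^3 - 3*A*a^2 + 3*A*a^2*c^3 + A*s^2 - A*s^2*cb^3 - 3*A^2*a + 3*A^2*a*c^3 - 3*A^2*s + 2*A^2*s*cb^3 + A^2*s*c^3 + A^3 - A^3*cb^3)
        (mul_ne_zero hᾱ hα))
    · intro x hx
      simp only [Set.mem_setOf_eq] at hx ⊢
      exact (main x hx).1
    · intro x1 h1 x2 h2 hfx
      simp only [Set.mem_setOf_eq] at h1 h2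
      have hfx' : x1 ^ 3 ^ m - x1 + δ = x2 ^ 3 ^ m - x2 + δ := hfx
      have e1 := (main x1 h1).2
      have e2 := (main x2 h2).2
      rw [hfx'] at e1
      have e3 : x1^3 = x2^3 := mul_left_cancel₀ hα (by rw [e1, e2])
      have e4 : (x1 - x2)^3 = 0 := by
        rw [hcube_sub, e3]
        ring
      have e5 := pow_eq_zero_iff (by norm_num : 3 ≠ 0) |>.mp e4
      exact sub_eq_zero.mp e5
  refine ⟨part1, ?_⟩
  -- PART 2: existence of (a,b) with exactly three solutions
  have h3m2 : 2 ≤ 3 ^ m := le_trans (by norm_num) (Nat.pow_le_pow_right (by norm_num) hm)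
  have hex : ∃ g : F, g ^ 3 ^ m - g ≠ 0 := by
    by_contra hall
    push_neg at hall
    have h1 : (Set.univ : Set F) ⊆ {x : F | x ^ 3 ^ m = (1 : F) * x} := by
      intro x _
      simp only [Set.mem_setOf_eq, one_mul]
      exact sub_eq_zero.mp (hall x)
    have h2 : (Set.univ : Set F).ncard ≤ 3 ^ m :=
      le_trans (Set.ncard_le_ncard h1 (Set.toFinite _)) (aux_pow_eq _ h3m2 _)
    have h3 : Fintype.card F ≤ 3 ^ m := by
      rwa [Set.ncard_univ, Nat.card_eq_fintype_card] at h2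
    rw [hF] at h3
    have h4 : (3 : ℕ) ^ m < 3 ^ (2 * m) := Nat.pow_lt_pow_right (by norm_num) (by omega)
    omega
  obtain ⟨g, hg⟩ := hex
  set w := g ^ 3 ^ m - g with hw
  have hw0 : w ≠ 0 := hg
  clear_value w
  have hφw : w ^ 3 ^ m = -w := by
    rw [hw, hpsub, hφφ]
    ring
  have hφg : g ^ 3 ^ m = g + w := by
    rw [hw]
    ring
  have hcardKK : Fintype.card F = 3 ^ m * 3 ^ m := by
    rw [hF, ← pow_add]
    congr 1
    omega
  have hsurj : ∀ z : F, z ^ 3 ^ m = -z → ∃ x : F, x ^ 3 ^ m - x = z :=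
    fun z hz => aux_surj h3m2 hcardKK hpadd hz
  have hsp : s ^ 3 ^ m = s := by
    rw [← hφd]
    exact hφs
  -- the shift element A
  set A := ((1 - c ^ 3) * (1 - cb ^ 3) * (s ^ 2 + w ^ 2)) / (s * (c ^ 3 - cb ^ 3)) with hA
  have hsγ : s * (c ^ 3 - cb ^ 3) ≠ 0 := mul_ne_zero hs0 hγ
  have hAkey : A * (s * (c ^ 3 - cb ^ 3)) = (1 - c ^ 3) * (1 - cb ^ 3) * (s ^ 2 + w ^ 2) := by
    rw [hA]
    exact div_mul_cancel₀ _ hsγ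
  have hφA : A ^ 3 ^ m = -A := by
    have h1 : φ A = -A := by
      rw [hA, map_div₀]
      simp only [map_add, map_sub, map_mul, map_pow, map_one]
      rw [hφc, hφcb, hφs, show φ w = -w from by rw [hφd]; exact hφw]
      rw [show s * (cb ^ 3 - c ^ 3) = -(s * (c ^ 3 - cb ^ 3)) by ring, div_neg]
      rw [show (1 - cb ^ 3) * (1 - c ^ 3) * (s ^ 2 + (-w) ^ 2)
            = (1 - c ^ 3) * (1 - cb ^ 3) * (s ^ 2 + w ^ 2) by ring]
    rw [← hφd]
    exact h1
  clear_value A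
  obtain ⟨a, ha⟩ := hsurj A hφA
  -- the cube root η of s * w ^ 2
  set η := (s * w ^ 2) ^ 3 ^ (2 * m - 1) with hη
  clear_value η
  have hη3 : η ^ 3 = s * w ^ 2 := by
    rw [hη, ← pow_mul, show (3 : ℕ) ^ (2 * m - 1) * 3 = 3 ^ (2 * m) from by
      rw [← pow_succ]; congr 1; omega]
    exact hq2 _
  have hφη : η ^ 3 ^ m = η := by
    have h1 : (η ^ 3 ^ m) ^ 3 = η ^ 3 := by
      rw [pow_right_comm, hη3, mul_pow, hsp, pow_right_comm w 2 (3 ^ m), hφw]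
      ring
    have h2 : (η ^ 3 ^ m - η) ^ 3 = 0 := by
      rw [hcube_sub, h1]
      ring
    exact sub_eq_zero.mp (pow_eq_zero_iff (by norm_num : 3 ≠ 0) |>.mp h2)
  set e2 := η - g with he2
  clear_value e2
  have he2w : e2 ^ 3 ^ m - e2 = -w := by
    rw [he2, hpsub, hφη, hφg]
    ring
  have he2cube : e2 ^ 3 = s * w ^ 2 - g ^ 3 := by
    rw [he2, hcube_sub, hη3]
  -- the common value τ
  set τ := ((1 - c ^ 3) * (w ^ 3 + s * w ^ 2 + s ^ 2 * w) - s * A * w + (1 - c ^ 3) * g ^ 3) /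
      (s * w * (1 - c ^ 3)) with hτ
  have hden1 : s * w * (1 - c ^ 3) ≠ 0 := mul_ne_zero (mul_ne_zero hs0 hw0) hα
  clear_value τ
  have hτkey : τ * (s * w * (1 - c ^ 3))
      = (1 - c ^ 3) * (w ^ 3 + s * w ^ 2 + s ^ 2 * w) - s * A * w + (1 - c ^ 3) * g ^ 3 := by
    rw [hτ]
    exact div_mul_cancel₀ _ hden1
  have hden2 : s * -w * (1 - cb ^ 3) ≠ 0 :=
    mul_ne_zero (mul_ne_zero hs0 (neg_ne_zero.mpr hw0)) hᾱ
  have hφτ : φ τ = ((1 - cb ^ 3) * ((-w) ^ 3 + s * (-w) ^ 2 + s ^ 2 * -w) - s * -A * -w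
      + (1 - cb ^ 3) * (g + w) ^ 3) / (s * -w * (1 - cb ^ 3)) := by
    rw [hτ, map_div₀]
    simp only [map_add, map_sub, map_mul, map_pow, map_one]
    rw [hφc, hφs, show φ w = -w from by rw [hφd]; exact hφw,
      show φ A = -A from by rw [hφd]; exact hφA,
      show φ g = g + w from by rw [hφd]; exact hφg]
  have hτL : τ ^ 3 ^ m + τ = s := by
    rw [← hφd, hφτ]
    rw [hτ]
    rw [div_add_div _ _ hden2 hden1, div_eq_iff (mul_ne_zero hden2 hden1)]
    linear_combination (s * w ^ 2) * hAkey
      + ((1 - cb ^ 3) * (s * w * (1 - c ^ 3))) * hcube_add g w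
  have hτδ : (τ - δ) ^ 3 ^ m = -(τ - δ) := by
    rw [hpsub]
    linear_combination hτL - hφδ
  obtain ⟨x, hx⟩ := hsurj (τ - δ) hτδ
  refine ⟨a, G (x + a) - c * G x, ?_⟩
  -- the u-values at the relevant points
  have hu0 : x ^ 3 ^ m - x + δ = τ := by linear_combination hx
  have hu1 : (x + g) ^ 3 ^ m - (x + g) + δ = τ + w := by
    rw [hpadd]
    linear_combination hx - hw
  have hu2 : (x + e2) ^ 3 ^ m - (x + e2) + δ = τ + -w := by
    rw [hpadd]
    linear_combination hx + he2w
  have hu3 : (x + a) ^ 3 ^ m - (x + a) + δ = τ + A := by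
    rw [hpadd]
    linear_combination hx + ha
  have hu4 : (x + g + a) ^ 3 ^ m - (x + g + a) + δ = τ + w + A := by
    rw [hpadd, hpadd]
    linear_combination hx - hw + ha
  have hu5 : (x + e2 + a) ^ 3 ^ m - (x + e2 + a) + δ = τ + -w + A := by
    rw [hpadd, hpadd]
    linear_combination hx + he2w + ha
  have c0 : (G x) ^ 3 = τ * (s - τ) ^ 2 + x ^ 3 := by rw [hGc x, hu0]
  have c1 : (G (x + g)) ^ 3 = (τ + w) * (s - (τ + w)) ^ 2 + (x + g) ^ 3 := by
    rw [hGc (x + g), hu1]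
  have c2 : (G (x + e2)) ^ 3 = (τ + -w) * (s - (τ + -w)) ^ 2 + (x + e2) ^ 3 := by
    rw [hGc (x + e2), hu2]
  have c3 : (G (x + a)) ^ 3 = (τ + A) * (s - (τ + A)) ^ 2 + (x + a) ^ 3 := by
    rw [hGc (x + a), hu3]
  have c4 : (G (x + g + a)) ^ 3 = (τ + w + A) * (s - (τ + w + A)) ^ 2 + (x + g + a) ^ 3 := by
    rw [hGc (x + g + a), hu4]
  have c5 : (G (x + e2 + a)) ^ 3 = (τ + -w + A) * (s - (τ + -w + A)) ^ 2 + (x + e2 + a) ^ 3 := by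
    rw [hGc (x + e2 + a), hu5]
  -- x + g is a solution
  have mem1 : G (x + g + a) - c * G (x + g) = G (x + a) - c * G x := by
    have hD3 : (G (x + g + a) - c * G (x + g) - (G (x + a) - c * G x)) ^ 3 = 0 := by
      have hexp : (G (x + g + a) - c * G (x + g) - (G (x + a) - c * G x)) ^ 3
          = (τ + w + A) * (s - (τ + w + A)) ^ 2 - c ^ 3 * ((τ + w) * (s - (τ + w)) ^ 2)
            - (τ + A) * (s - (τ + A)) ^ 2 + c ^ 3 * (τ * (s - τ) ^ 2) + (1 - c ^ 3) * g ^ 3 := by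
        linear_combination hcube_sub (G (x + g + a) - c * G (x + g)) (G (x + a) - c * G x)
          + hcube_sub (G (x + g + a)) (c * G (x + g)) - hcube_sub (G (x + a)) (c * G x)
          + c4 - c ^ 3 * c1 - c3 + c ^ 3 * c0
          + hcube_add (x + g) a + (1 - c ^ 3) * hcube_add x g - hcube_add x a
      rw [hexp]
      linear_combination -hτkey + (w * τ ^ 2 + w ^ 2 * τ - c ^ 3 * w * τ ^ 2 - c ^ 3 * w ^ 2 * τ
        - s * w * τ - s * w ^ 2 + s * c ^ 3 * w * τ + s * c ^ 3 * w ^ 2 + 2 * A * w * τ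
        + A * w ^ 2 - A * s * w + A ^ 2 * w) * h30
    have hD := pow_eq_zero_iff (by norm_num : 3 ≠ 0) |>.mp hD3
    linear_combination hD
  -- x + e2 is a solution
  have mem2 : G (x + e2 + a) - c * G (x + e2) = G (x + a) - c * G x := by
    have hD3 : (G (x + e2 + a) - c * G (x + e2) - (G (x + a) - c * G x)) ^ 3 = 0 := by
      have hexp : (G (x + e2 + a) - c * G (x + e2) - (G (x + a) - c * G x)) ^ 3
          = (τ + -w + A) * (s - (τ + -w + A)) ^ 2 - c ^ 3 * ((τ + -w) * (s - (τ + -w)) ^ 2)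
            - (τ + A) * (s - (τ + A)) ^ 2 + c ^ 3 * (τ * (s - τ) ^ 2) + (1 - c ^ 3) * e2 ^ 3 := by
        linear_combination hcube_sub (G (x + e2 + a) - c * G (x + e2)) (G (x + a) - c * G x)
          + hcube_sub (G (x + e2 + a)) (c * G (x + e2)) - hcube_sub (G (x + a)) (c * G x)
          + c5 - c ^ 3 * c2 - c3 + c ^ 3 * c0
          + hcube_add (x + e2) a + (1 - c ^ 3) * hcube_add x e2 - hcube_add x a
      rw [hexp]
      linear_combination hτkey + (1 - c ^ 3) * he2cube + (-(w * τ ^ 2) + w ^ 2 * τ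
        + c ^ 3 * w * τ ^ 2 - c ^ 3 * w ^ 2 * τ + s * w * τ - s * c ^ 3 * w * τ - 2 * A * w * τ
        + A * w ^ 2 + A * s * w - A ^ 2 * w) * h30
    have hD := pow_eq_zero_iff (by norm_num : 3 ≠ 0) |>.mp hD3
    linear_combination hD
  -- distinctness
  have hg0 : g ≠ 0 := by
    intro h
    apply hw0
    rw [hw, h]
    simp [zero_pow (by positivity : 3 ^ m ≠ 0)]
  have he20 : e2 ≠ 0 := by
    intro h
    apply hw0
    have h1 := he2w
    rw [h] at h1
    have h2 : (0 : F) = -w := by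
      simpa [zero_pow (by positivity : 3 ^ m ≠ 0)] using h1
    exact neg_eq_zero.mp h2.symm
  have hge2 : g ≠ e2 := by
    intro h
    apply hw0
    have h1 : w = -w := by
      nth_rewrite 1 [hw]
      rw [h]
      exact he2w
    linear_combination -h1 + w * h30
  -- the three solutions
  have hsub3 : ({x, x + g, x + e2} : Set F) ⊆
      {y : F | G (y + a) - c * G y = G (x + a) - c * G x} := by
    intro y hy
    simp only [Set.mem_insert_iff, Set.mem_singleton_iff] at hy
    rcases hy with h | h | h <;> subst h
    · simp only [Set.mem_setOf_eq]
    · exact mem1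
    · exact mem2
  have hcnt : ({x, x + g, x + e2} : Set F).ncard = 3 := by
    have h1 : x ∉ ({x + g, x + e2} : Set F) := by
      simp only [Set.mem_insert_iff, Set.mem_singleton_iff]
      push_neg
      exact ⟨fun h => hg0 (left_eq_add.mp h), fun h => he20 (left_eq_add.mp h)⟩
    have h2 : x + g ≠ x + e2 := fun h => hge2 (add_left_cancel h)
    rw [Set.ncard_insert_of_notMem h1 (Set.toFinite _), Set.ncard_pair h2]
  have hge3 : 3 ≤ ({y : F | G (y + a) - c * G y = G (x + a) - c * G x}).ncard := by
    rw [← hcnt]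
    exact Set.ncard_le_ncard hsub3 (Set.toFinite _)
  exact le_antisymm (part1 a _) hge3
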